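/- arXiv:1809.10035 — 2 statements merged into one kernel-verified Lean document; each statement's English description precedes it below -/
import Mathlib

section
/- Let g : ℝ^n → ℝ be μ-strongly convex (μ > 0) with subgradients bounded by C_g on a nonempty closed convex set X, f : ℝ^n → ℝ convex, and for η > 0 let x*_η be the unique minimizer of f + η g over X. Then for any 0 < η' ≤ η, ‖x*_{η'} - x*_η‖ ≤ (C_g/μ)·|η/η' - 1|. -/
open RealInnerProductSpace

/-- `s` is a subgradient of `f` at `x`. -/
def SubgradientAt {n : ℕ} (f : EuclideanSpace ℝ (Fin n) → ℝ)
    (x s : EuclideanSpace ℝ (Fin n)) : Prop :=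
  ∀ y, f x + ⟪s, y - x⟫ ≤ f y

lemma exists_subgradient {n : ℕ} {g : EuclideanSpace ℝ (Fin n) → ℝ}
    (hg : ConvexOn ℝ Set.univ g) (x : EuclideanSpace ℝ (Fin n)) :
    ∃ s, SubgradientAt g x s := by
  have hcont : Continuous g :=
    continuousOn_univ.mp (hg.continuousOn isOpen_univ)
  set S : Set (EuclideanSpace ℝ (Fin n) × ℝ) := {p | g p.1 < p.2} with hS
  have hSopen : IsOpen S := isOpen_lt (hcont.comp continuous_fst) continuous_snd
  have hSconv : Convex ℝ S := by
    rintro ⟨y₁, t₁⟩ h₁ ⟨y₂, t₂⟩ h₂ a b ha hb hab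
    simp only [hS, Set.mem_setOf_eq] at h₁ h₂ ⊢
    calc g (a • y₁ + b • y₂) ≤ a * g y₁ + b * g y₂ :=
          hg.2 (Set.mem_univ _) (Set.mem_univ _) ha hb hab
      _ < a * t₁ + b * t₂ := by
          rcases eq_or_lt_of_le ha with rfl | ha'
          · simp only [zero_add] at hab; subst hab; simpa using h₂
          · rcases eq_or_lt_of_le hb with rfl | hb'
            · simp only [add_zero] at hab; subst hab; simpa using h₁
            · exact add_lt_add (by nlinarith) (by nlinarith)
      _ = (a • (y₁, t₁) + b • (y₂, t₂) : EuclideanSpace ℝ (Fin n) × ℝ).2 := rfl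
  have hxS : (x, g x) ∉ S := by simp [hS]
  obtain ⟨ℓ, hℓ⟩ := geometric_hahn_banach_open_point hSconv hSopen hxS
  set L : EuclideanSpace ℝ (Fin n) →L[ℝ] ℝ :=
    ℓ.comp (ContinuousLinearMap.inl ℝ (EuclideanSpace ℝ (Fin n)) ℝ) with hL
  set a : ℝ := ℓ (0, 1) with ha_def
  have hlin : ∀ (y : EuclideanSpace ℝ (Fin n)) (t : ℝ), ℓ (y, t) = L y + t * a := by
    intro y t
    have : (y, t) = ((y, 0) : EuclideanSpace ℝ (Fin n) × ℝ)
        + t • ((0 : EuclideanSpace ℝ (Fin n)), (1:ℝ)) := by simp [Prod.ext_iff]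
    rw [this, map_add, map_smul]
    simp [hL, ha_def, ContinuousLinearMap.inl_apply]
  have haneg : a < 0 := by
    have := hℓ (x, g x + 1) (by simp [hS])
    rw [hlin, hlin] at this; linarith
  have hne : a ≠ 0 := ne_of_lt haneg
  have hkey : ∀ y, L y + g y * a ≤ L x + g x * a := by
    intro y
    have h : ∀ ε : ℝ, 0 < ε → L y + (g y + ε) * a < L x + g x * a := by
      intro ε hε
      have := hℓ (y, g y + ε) (by simp [hS, hε])
      rwa [hlin, hlin] at this
    by_contra hcon
    push_neg at hcon
    have hε : (0:ℝ) < (L y + g y * a - (L x + g x * a)) / (-a) := by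
      apply div_pos (by linarith) (by linarith)
    have h2 := h _ hε
    have hεa : (L y + g y * a - (L x + g x * a)) / -a * a
        = -(L y + g y * a - (L x + g x * a)) := by
      rw [div_mul_eq_mul_div, mul_div_assoc, div_neg, div_self hne]; ring
    nlinarith [h2, hεa]
  refine ⟨(InnerProductSpace.toDual ℝ (EuclideanSpace ℝ (Fin n))).symm ((-a⁻¹) • L),
    fun y => ?_⟩
  rw [InnerProductSpace.toDual_symm_apply]
  simp only [ContinuousLinearMap.smul_apply, smul_eq_mul]
  have hLsub : L (y - x) = L y - L x := map_sub L y x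
  rw [hLsub]
  have hk := hkey y
  have hpos : 0 < -a⁻¹ := neg_pos.2 (inv_lt_zero.2 haneg)
  have h5 := mul_le_mul_of_nonneg_left (show L y - L x ≤ (g x - g y) * a by linarith) hpos.le
  have h6 : -a⁻¹ * ((g x - g y) * a) = g y - g x := by field_simp; ring
  linarith

lemma strong_min {n : ℕ} {F : EuclideanSpace ℝ (Fin n) → ℝ} {c : ℝ} (hc : 0 < c)
    (hF : StrongConvexOn Set.univ c F) {X : Set (EuclideanSpace ℝ (Fin n))}
    (hXcv : Convex ℝ X) {x : EuclideanSpace ℝ (Fin n)} (hx : x ∈ X)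
    (hmin : IsMinOn F X x) {y : EuclideanSpace ℝ (Fin n)} (hy : y ∈ X) :
    F x + c / 2 * ‖y - x‖ ^ 2 ≤ F y := by
  set K := c / 2 * ‖y - x‖ ^ 2 with hK
  have hK0 : 0 ≤ K := by positivity
  have hstep : ∀ t : ℝ, t ∈ Set.Ioo (0:ℝ) 1 → F x + (1 - t) * K ≤ F y := by
    rintro t ⟨ht0, ht1⟩
    have hmem : t • y + (1 - t) • x ∈ X := hXcv hy hx ht0.le (by linarith) (by ring)
    have h1 : F x ≤ F (t • y + (1 - t) • x) := hmin hmem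
    have h2 := hF.2 (Set.mem_univ y) (Set.mem_univ x) ht0.le (by linarith : (0:ℝ) ≤ 1 - t)
      (by ring)
    simp only [smul_eq_mul] at h2
    rw [hK]
    nlinarith [h2, h1]
  have htend : Filter.Tendsto (fun t : ℝ => F x + (1 - t) * K) (nhdsWithin (0:ℝ) (Set.Ioi 0))
      (nhds (F x + (1 - 0) * K)) := by
    apply Filter.Tendsto.mono_left _ nhdsWithin_le_nhds
    exact (Continuous.tendsto (by continuity) 0)
  have : F x + (1 - 0) * K ≤ F y := by
    refine le_of_tendsto htend ?_
    filter_upwards [Ioo_mem_nhdsGT (by norm_num : (0:ℝ) < 1)] with t ht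
      using hstep t ht
  simpa using this

theorem regularization_path_bound (n : ℕ)
    (X : Set (EuclideanSpace ℝ (Fin n)))
    (hXne : X.Nonempty) (hXcl : IsClosed X) (hXcv : Convex ℝ X)
    (f g : EuclideanSpace ℝ (Fin n) → ℝ)
    (hf : ConvexOn ℝ Set.univ f)
    (μ : ℝ) (hμ : 0 < μ)
    (hg : StrongConvexOn Set.univ μ g)
    (Cg : ℝ) (hCg : ∀ x ∈ X, ∀ s, SubgradientAt g x s → ‖s‖ ≤ Cg)
    (η η' : ℝ) (hη' : 0 < η') (hη'η : η' ≤ η)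
    (xη xη' : EuclideanSpace ℝ (Fin n))
    (hxη : xη ∈ X) (hxηmin : IsMinOn (fun y => f y + η * g y) X xη)
    (hxη' : xη' ∈ X) (hxη'min : IsMinOn (fun y => f y + η' * g y) X xη') :
    ‖xη' - xη‖ ≤ (Cg / μ) * |η / η' - 1| := by
  have hη : 0 < η := lt_of_lt_of_le hη' hη'η
  -- strong convexity of the regularized objectives
  have hsc : ∀ t : ℝ, 0 < t → StrongConvexOn Set.univ (t * μ) (fun y => f y + t * g y) := by
    intro t ht
    refine ⟨convex_univ, fun x _ y _ a b ha hb hab => ?_⟩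
    have h1 := hf.2 (Set.mem_univ x) (Set.mem_univ y) ha hb hab
    have h2 := hg.2 (Set.mem_univ x) (Set.mem_univ y) ha hb hab
    simp only [smul_eq_mul] at h1 h2 ⊢
    nlinarith [h2]
  have h1 := strong_min (mul_pos hη hμ) (hsc η hη) hXcv hxη hxηmin hxη'
  have h2 := strong_min (mul_pos hη' hμ) (hsc η' hη') hXcv hxη' hxη'min hxη
  -- subgradient bound
  obtain ⟨s, hs⟩ := exists_subgradient (hg.convexOn (fun r => by positivity)) xη'
  have hsn : ‖s‖ ≤ Cg := hCg xη' hxη' s hs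
  have hgd : g xη' - g xη ≤ Cg * ‖xη' - xη‖ := by
    have := hs xη
    have hip : ⟪s, xη - xη'⟫ ≥ -(Cg * ‖xη' - xη‖) := by
      have h3 := abs_real_inner_le_norm s (xη - xη')
      have h4 : ‖xη - xη'‖ = ‖xη' - xη‖ := norm_sub_rev _ _
      have h5 : ‖s‖ * ‖xη - xη'‖ ≤ Cg * ‖xη' - xη‖ := by
        rw [h4]; exact mul_le_mul_of_nonneg_right hsn (norm_nonneg _)
      nlinarith [le_abs_self (⟪s, xη - xη'⟫), neg_abs_le (⟪s, xη - xη'⟫)]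
    linarith
  have hnorm : ‖xη - xη'‖ = ‖xη' - xη‖ := norm_sub_rev _ _
  rw [hnorm] at h2
  -- combine: (η + η') * μ / 2 * ‖d‖² ≤ (η - η') * (g xη' - g xη)
  set d := ‖xη' - xη‖ with hd
  have hd0 : 0 ≤ d := norm_nonneg _
  have hcomb : η' * μ * d ^ 2 ≤ (η - η') * (Cg * d) := by
    nlinarith [h1, h2, mul_le_mul_of_nonneg_left hgd (by linarith : (0:ℝ) ≤ η - η'),
      mul_nonneg (mul_nonneg (by linarith : (0:ℝ) ≤ η - η') hμ.le) (sq_nonneg d)]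
  have habs : |η / η' - 1| = (η - η') / η' := by
    rw [abs_of_nonneg]
    · field_simp
    · rw [sub_nonneg, le_div_iff₀ hη']; linarith
  rw [habs]
  have hCg0 : 0 ≤ Cg := le_trans (norm_nonneg s) hsn
  have heq : Cg / μ * ((η - η') / η') = Cg * (η - η') / (μ * η') := by ring
  rw [heq]
  rcases eq_or_lt_of_le hd0 with h0 | hdpos
  · rw [← h0]
    exact div_nonneg (mul_nonneg hCg0 (by linarith)) (by positivity)
  · rw [le_div_iff₀ (by positivity)]
    nlinarith [hcomb, hdpos]
end

section
/- Under the hypotheses of the regularization path lemma, if additionally g is continuous and the set argmin_{x∈X} f has a minimizer x*_g of g over it (the bilevel solution), then as η_k → 0⁺ the regularized solutions x*_{η_k} converge to x*_g, the unique minimizer of g over argmin_{x∈X} f. -/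
open Filter

theorem tikhonov_limit (n : ℕ)
    (X : Set (EuclideanSpace ℝ (Fin n)))
    (hXne : X.Nonempty) (hXcl : IsClosed X) (hXcv : Convex ℝ X)
    (f g : EuclideanSpace ℝ (Fin n) → ℝ)
    (hf : ConvexOn ℝ Set.univ f)
    (μ : ℝ) (hμ : 0 < μ)
    (hg : StrongConvexOn Set.univ μ g)
    (hgc : Continuous g)
    (xg : EuclideanSpace ℝ (Fin n))
    (hxg : xg ∈ {x | x ∈ X ∧ IsMinOn f X x})
    (hxgmin : IsMinOn g {x | x ∈ X ∧ IsMinOn f X x} xg)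
    (η : ℕ → ℝ) (hη : ∀ k, 0 < η k) (hη0 : Tendsto η atTop (nhds 0))
    (xη : ℕ → EuclideanSpace ℝ (Fin n))
    (hxη : ∀ k, xη k ∈ X)
    (hxηmin : ∀ k, IsMinOn (fun y => f y + η k * g y) X (xη k)) :
    Tendsto xη atTop (nhds xg) := by
  obtain ⟨hxgX, hxgmf⟩ := hxg
  have hgcv : ConvexOn ℝ Set.univ g :=
    hg.convexOn (fun r => by positivity)
  -- key inequality
  have key : ∀ k, μ/4 * ‖xη k - xg‖^2 ≤ g xg - g (xη k) := by
    intro k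
    have hm : (2⁻¹ : ℝ) • xη k + (2⁻¹ : ℝ) • xg ∈ X :=
      hXcv (hxη k) hxgX (by norm_num) (by norm_num) (by norm_num)
    have h1 : f (xη k) + η k * g (xη k) ≤
        f ((2⁻¹ : ℝ) • xη k + (2⁻¹ : ℝ) • xg) + η k * g ((2⁻¹ : ℝ) • xη k + (2⁻¹ : ℝ) • xg) :=
      isMinOn_iff.mp (hxηmin k) _ hm
    have h2 : f ((2⁻¹ : ℝ) • xη k + (2⁻¹ : ℝ) • xg) ≤ 2⁻¹ * f (xη k) + 2⁻¹ * f xg := by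
      have := hf.2 (Set.mem_univ (xη k)) (Set.mem_univ xg)
        (by norm_num : (0:ℝ) ≤ 2⁻¹) (by norm_num : (0:ℝ) ≤ 2⁻¹) (by norm_num)
      simpa using this
    have h3 : g ((2⁻¹ : ℝ) • xη k + (2⁻¹ : ℝ) • xg) ≤
        2⁻¹ * g (xη k) + 2⁻¹ * g xg - 2⁻¹ * 2⁻¹ * (μ/2 * ‖xη k - xg‖^2) := by
      have := hg.2 (Set.mem_univ (xη k)) (Set.mem_univ xg)
        (by norm_num : (0:ℝ) ≤ 2⁻¹) (by norm_num : (0:ℝ) ≤ 2⁻¹) (by norm_num)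
      simpa using this
    have h4 : f xg ≤ f (xη k) := isMinOn_iff.mp hxgmf _ (hxη k)
    have h5 : η k * g ((2⁻¹ : ℝ) • xη k + (2⁻¹ : ℝ) • xg) ≤
        η k * (2⁻¹ * g (xη k) + 2⁻¹ * g xg - 2⁻¹ * 2⁻¹ * (μ/2 * ‖xη k - xg‖^2)) :=
      mul_le_mul_of_nonneg_left h3 (hη k).le
    have h6 : η k * (μ/4 * ‖xη k - xg‖^2 + g (xη k) - g xg) ≤ η k * 0 := by
      rw [mul_zero]; nlinarith [h1, h2, h4, h5]
    have h7 := le_of_mul_le_mul_left h6 (hη k)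
    linarith
  have hgle : ∀ k, g (xη k) ≤ g xg := by
    intro k
    nlinarith [key k, sq_nonneg ‖xη k - xg‖]
  -- boundedness
  obtain ⟨z, hz, hzmin⟩ := (isCompact_closedBall xg 1).exists_isMinOn
    ⟨xg, Metric.mem_closedBall_self zero_le_one⟩ hgc.continuousOn
  set R : ℝ := max 1 (4*(g xg - g z)/μ) with hRdef
  have hbound : ∀ k, ‖xη k - xg‖ ≤ R := by
    intro k
    rcases le_or_gt ‖xη k - xg‖ 1 with h | h
    · exact h.trans (le_max_left _ _)
    · set d := ‖xη k - xg‖ with hddef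
      have hd0 : 0 < d := lt_trans one_pos h
      set a : ℝ := d⁻¹ with hadef
      have ha0 : 0 < a := inv_pos.mpr hd0
      have had : a * d = 1 := inv_mul_cancel₀ hd0.ne'
      have ha1 : a ≤ 1 := by nlinarith
      set y := a • xη k + (1-a) • xg with hydef
      have hy : g y ≤ a * g (xη k) + (1-a) * g xg := by
        have := hgcv.2 (Set.mem_univ (xη k)) (Set.mem_univ xg)
          ha0.le (by linarith : (0:ℝ) ≤ 1-a) (by ring)
        simpa using this
      have hysub : y - xg = a • (xη k - xg) := by
        rw [hydef]; module
      have hymem : y ∈ Metric.closedBall xg 1 := by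
        rw [Metric.mem_closedBall, dist_eq_norm, hysub, norm_smul,
          Real.norm_eq_abs, abs_of_pos ha0, ← hddef, had]
      have hgy : g z ≤ g y := isMinOn_iff.mp hzmin y hymem
      have had2 : a * d^2 = d := by rw [pow_two, ← mul_assoc, had, one_mul]
      have had3 : μ * (a * d^2) = μ * d := by rw [had2]
      have hkey := mul_le_mul_of_nonneg_left (key k) ha0.le
      have hdR : d ≤ 4*(g xg - g z)/μ := by
        rw [le_div_iff₀ hμ]
        nlinarith [hgy, hy, hkey, had3]
      exact hdR.trans (le_max_right _ _)
  -- subsequence argument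
  have hfc : Continuous f := by
    rw [← continuousOn_univ]
    exact hf.continuousOn isOpen_univ
  apply tendsto_of_subseq_tendsto
  intro ns hns
  have hmem : ∀ p, xη (ns p) ∈ Metric.closedBall xg R := by
    intro p
    rw [Metric.mem_closedBall, dist_eq_norm]
    exact hbound _
  obtain ⟨xbar, hxbarcl, ms, hms, hconv⟩ :=
    tendsto_subseq_of_bounded Metric.isBounded_closedBall hmem
  refine ⟨ms, ?_⟩
  set u : ℕ → EuclideanSpace ℝ (Fin n) := fun p => xη (ns (ms p)) with hudef
  have hconv' : Tendsto u atTop (nhds xbar) := hconv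
  have hηu : Tendsto (fun p => η (ns (ms p))) atTop (nhds 0) :=
    hη0.comp (hns.comp hms.tendsto_atTop)
  have hgu : Tendsto (fun p => g (u p)) atTop (nhds (g xbar)) :=
    (hgc.tendsto xbar).comp hconv'
  have hfu : Tendsto (fun p => f (u p)) atTop (nhds (f xg)) := by
    apply tendsto_of_tendsto_of_tendsto_of_le_of_le
      (g := fun _ => f xg)
      (h := fun p => f xg + η (ns (ms p)) * (g xg - g (u p)))
      tendsto_const_nhds
    · have : Tendsto (fun p => f xg + η (ns (ms p)) * (g xg - g (u p))) atTop
        (nhds (f xg + 0 * (g xg - g xbar))) :=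
        tendsto_const_nhds.add (hηu.mul (tendsto_const_nhds.sub hgu))
      simpa using this
    · intro p
      exact isMinOn_iff.mp hxgmf _ (hxη _)
    · intro p
      have h1 : f (u p) + η (ns (ms p)) * g (u p) ≤ f xg + η (ns (ms p)) * g xg :=
        isMinOn_iff.mp (hxηmin _) xg hxgX
      show f (u p) ≤ f xg + η (ns (ms p)) * (g xg - g (u p))
      nlinarith [h1]
  have hfxbar : f xbar = f xg :=
    tendsto_nhds_unique ((hfc.tendsto xbar).comp hconv') hfu
  have hxbarX : xbar ∈ X :=
    hXcl.mem_of_tendsto hconv' (Filter.Eventually.of_forall (fun p => hxη _))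
  have hxbarmin : IsMinOn f X xbar := by
    rw [isMinOn_iff]
    intro y hy
    rw [hfxbar]
    exact isMinOn_iff.mp hxgmf y hy
  have hggood : g xg ≤ g xbar := isMinOn_iff.mp hxgmin xbar ⟨hxbarX, hxbarmin⟩
  have hgbarle : g xbar ≤ g xg :=
    le_of_tendsto hgu (Filter.Eventually.of_forall (fun p => hgle _))
  have hgeq : g xbar = g xg := le_antisymm hgbarle hggood
  -- squeeze the norm
  have hd2 : Tendsto (fun p => ‖u p - xg‖^2) atTop (nhds 0) := by
    apply squeeze_zero (fun p => sq_nonneg _)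
      (g := fun p => 4/μ * (g xg - g (u p)))
    · intro p
      rw [div_mul_eq_mul_div, le_div_iff₀ hμ]
      nlinarith [key (ns (ms p))]
    · have : Tendsto (fun p => 4/μ * (g xg - g (u p))) atTop
        (nhds (4/μ * (g xg - g xbar))) :=
        tendsto_const_nhds.mul (tendsto_const_nhds.sub hgu)
      rw [hgeq] at this
      simpa using this
  have hd : Tendsto (fun p => ‖u p - xg‖) atTop (nhds 0) := by
    have h := (Real.continuous_sqrt.tendsto 0).comp hd2
    rw [Real.sqrt_zero] at h
    exact h.congr (fun p => Real.sqrt_sq (norm_nonneg _))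
  rw [tendsto_iff_norm_sub_tendsto_zero]
  exact hd
end
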